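/- Let f be a homeomorphism of a compact metric space X and K ⊆ X compact. If every point of K is shadowable, then f has the POTP through K: for every ε>0 there is δ>0 such that every δ-pseudo-orbit ξ with ξ_0 ∈ K can be ε-shadowed. -/
import Mathlib


open Metric Set

/-- Natural iterates of a homeomorphism. -/
def hnpow {X : Type*} [TopologicalSpace X] (f : X ≃ₜ X) : ℕ → X ≃ₜ X
  | 0 => Homeomorph.refl X
  | n+1 => (hnpow f n).trans f

/-- Integer iterates `fⁿ`, `n ∈ ℤ`, of a homeomorphism. -/
def hpow {X : Type*} [TopologicalSpace X] (f : X ≃ₜ X) : ℤ → X ≃ₜ X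
  | Int.ofNat n => hnpow f n
  | Int.negSucc n => hnpow f.symm (n+1)

variable {X : Type*} [MetricSpace X]

/-- `ξ` is a `δ`-pseudo-orbit of `f`. -/
def IsPseudoOrbit (f : X ≃ₜ X) (δ : ℝ) (ξ : ℤ → X) : Prop :=
  ∀ n : ℤ, dist (f (ξ n)) (ξ (n+1)) ≤ δ

/-- `ξ` is `ε`-shadowed by the orbit of `y`. -/
def ShadowedBy (f : X ≃ₜ X) (ε : ℝ) (y : X) (ξ : ℤ → X) : Prop :=
  ∀ n : ℤ, dist (hpow f n y) (ξ n) ≤ ε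

/-- `x` is a shadowable point of `f`. -/
def ShadowablePoint (f : X ≃ₜ X) (x : X) : Prop :=
  ∀ ε > 0, ∃ δ > 0, ∀ ξ : ℤ → X, IsPseudoOrbit f δ ξ → ξ 0 = x →
    ∃ y, ShadowedBy f ε y ξ

/-- `f` has the pseudo-orbit tracing property. -/
def POTP (f : X ≃ₜ X) : Prop :=
  ∀ ε > 0, ∃ δ > 0, ∀ ξ : ℤ → X, IsPseudoOrbit f δ ξ → ∃ y, ShadowedBy f ε y ξ

/-- `x` is a nonwandering point of `f`. -/
def NonWandering (f : X ≃ₜ X) (x : X) : Prop :=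
  ∀ U ∈ nhds x, ∃ k : ℕ, 0 < k ∧ ((hpow f (k : ℤ)) '' U ∩ U).Nonempty

/-- `x` is a chain recurrent point of `f`. -/
def ChainRecurrent (f : X ≃ₜ X) (x : X) : Prop :=
  ∀ ρ > 0, ∃ n : ℕ, 0 < n ∧ ∃ c : ℕ → X, c 0 = x ∧ c n = x ∧
    ∀ i < n, dist (f (c i)) (c (i+1)) ≤ ρ

/-- `f` is distal: `inf_{n∈ℤ} d(fⁿ x, fⁿ y) > 0` for all distinct `x, y`. -/
def Distal (f : X ≃ₜ X) : Prop :=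
  ∀ x y : X, x ≠ y → ∃ c > 0, ∀ n : ℤ, c ≤ dist (hpow f n x) (hpow f n y)

/-- `f` is minimal: every full orbit is dense. -/
def MinimalHomeo (f : X ≃ₜ X) : Prop :=
  ∀ x : X, Dense (Set.range fun n : ℤ => hpow f n x)

/-- `f` is equicontinuous (uniformly, over all integer iterates). -/
def EquicontinuousHomeo (f : X ≃ₜ X) : Prop :=
  ∀ α > 0, ∃ β > 0, ∀ x y : X, dist x y ≤ β → ∀ n : ℤ, dist (hpow f n x) (hpow f n y) ≤ α

theorem stmt16 [CompactSpace X] (f : X ≃ₜ X) (K : Set X) (hK : IsCompact K)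
    (h : ∀ x ∈ K, ShadowablePoint f x) :
    ∀ ε > 0, ∃ δ > 0, ∀ ξ : ℤ → X, IsPseudoOrbit f δ ξ → ξ 0 ∈ K →
      ∃ y, ShadowedBy f ε y ξ := by
  intro ε hε
  rcases K.eq_empty_or_nonempty with hKe | hKne
  · exact ⟨1, one_pos, fun ξ _ h0 => absurd (hKe ▸ h0) (notMem_empty _)⟩
  -- key claim: a local radius around each point of K
  have claim : ∀ x ∈ K, ∃ r > 0, ∀ ξ : ℤ → X, IsPseudoOrbit f r ξ → dist (ξ 0) x < r →
      ∃ y, ShadowedBy f ε y ξ := by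
    intro x hx
    obtain ⟨D, hD, hDsh⟩ := h x hx (ε/2) (by linarith)
    -- uniform continuity of f
    obtain ⟨u, hu, hufc⟩ := Metric.uniformContinuous_iff.mp
      (CompactSpace.uniformContinuous_of_continuous f.continuous) (D/2) (by linarith)
    refine ⟨min (min (u/2) (D/4)) (ε/2), by positivity, fun ξ hξ h0 => ?_⟩
    set r := min (min (u/2) (D/4)) (ε/2) with hr
    have hru : r ≤ u/2 := le_trans (min_le_left _ _) (min_le_left _ _)
    have hrD : r ≤ D/4 := le_trans (min_le_left _ _) (min_le_right _ _)
    have hrε : r ≤ ε/2 := min_le_right _ _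
    set ξ' : ℤ → X := fun n => if n = 0 then x else ξ n with hξ'
    have hpo : IsPseudoOrbit f D ξ' := by
      intro n
      rcases eq_or_ne n 0 with rfl | hn0
      · simp only [hξ', if_pos rfl, if_neg (by norm_num : (0:ℤ)+1 ≠ 0)]
        have h1 : dist (f x) (f (ξ 0)) < D/2 := hufc (by
          rw [dist_comm]; exact lt_of_lt_of_le h0 (by linarith))
        have h2 : dist (f (ξ 0)) (ξ 1) ≤ r := by simpa using hξ 0
        calc dist (f x) (ξ (0+1)) ≤ dist (f x) (f (ξ 0)) + dist (f (ξ 0)) (ξ (0+1)) :=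
              dist_triangle _ _ _
          _ ≤ D/2 + r := by simp only [zero_add]; exact add_le_add h1.le h2
          _ ≤ D := by linarith
      rcases eq_or_ne n (-1) with rfl | hn1
      · simp only [hξ', if_neg hn0, if_pos (by norm_num : (-1:ℤ)+1 = 0)]
        have h2 : dist (f (ξ (-1))) (ξ 0) ≤ r := by simpa using hξ (-1)
        calc dist (f (ξ (-1))) x ≤ dist (f (ξ (-1))) (ξ 0) + dist (ξ 0) x :=
              dist_triangle _ _ _
          _ ≤ r + r := add_le_add h2 h0.le
          _ ≤ D := by linarith
      · have hn1' : n + 1 ≠ 0 := fun hcon => hn1 (by omega)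
        simp only [hξ', if_neg hn0, if_neg hn1']
        exact le_trans (hξ n) (by linarith)
    obtain ⟨y, hy⟩ := hDsh ξ' hpo (by simp [hξ'])
    refine ⟨y, fun n => ?_⟩
    rcases eq_or_ne n 0 with rfl | hn0
    · have := hy 0
      simp only [hξ', if_pos rfl] at this
      calc dist (hpow f 0 y) (ξ 0) ≤ dist (hpow f 0 y) x + dist x (ξ 0) := dist_triangle _ _ _
        _ ≤ ε/2 + r := add_le_add this (by rw [dist_comm]; exact h0.le)
        _ ≤ ε := by linarith
    · have := hy n
      simp only [hξ', if_neg hn0] at this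
      linarith
  choose! r hr hrsh using claim
  obtain ⟨t, ht⟩ := hK.elim_nhds_subcover' (fun x hx => ball x (r x))
    (fun x hx => ball_mem_nhds _ (hr x hx))
  have htne : t.Nonempty := by
    obtain ⟨x, hx⟩ := hKne
    obtain ⟨z, hz, -⟩ := mem_iUnion₂.mp (ht hx)
    exact ⟨z, hz⟩
  refine ⟨t.inf' htne (fun z => r z.1), ?_, fun ξ hξ h0 => ?_⟩
  · rw [gt_iff_lt, Finset.lt_inf'_iff]
    exact fun z _ => hr z.1 z.2
  · obtain ⟨z, hz, hball⟩ := mem_iUnion₂.mp (ht h0)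
    refine hrsh z.1 z.2 ξ (fun n => le_trans (hξ n) ?_) (mem_ball.mp hball)
    exact Finset.inf'_le _ hz
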